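/- Let g : ℝ → ℝ be continuous on [0,1] and concave on [0,1] with g(0) ≥ 0 and g(1) ≥ 0. Then for all real numbers q*, q̄ with 0 ≤ q* ≤ q̄ ≤ 1, it holds that 2 · ∫_0^{q̄} g(t) dt + g(q̄) · (1 − q̄) ≥ g(q*). (This quantity is the revenue that the second-price auction with a duplicate extracts from a bidder and her duplicate when the highest competing bid has quantile q̄; it is at least the monopoly revenue g(q*).) -/

import Mathlib

/-- For `g` continuous and concave on `[0,1]` with `g 0 ≥ 0` and `g 1 ≥ 0`, and
`0 ≤ q* ≤ q̄ ≤ 1`, twice the area under `g` on `[0, q̄]` plus the rectangle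
`g(q̄) · (1 - q̄)` is at least `g(q*)`. -/
theorem stmt_10 (g : ℝ → ℝ)
    (hcont : ContinuousOn g (Set.Icc (0:ℝ) 1))
    (hconc : ConcaveOn ℝ (Set.Icc (0:ℝ) 1) g)
    (h0 : 0 ≤ g 0) (h1 : 0 ≤ g 1)
    (qstar qbar : ℝ) (h0q : 0 ≤ qstar) (hqq : qstar ≤ qbar) (hq1 : qbar ≤ 1) :
    g qstar ≤ 2 * (∫ t in (0:ℝ)..qbar, g t) + g qbar * (1 - qbar) := by
  have hb0 : (0:ℝ) ≤ qbar := h0q.trans hqq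
  have hs1 : qstar ≤ 1 := hqq.trans hq1
  have hsmem : qstar ∈ Set.Icc (0:ℝ) 1 := ⟨h0q, hs1⟩
  have h0mem : (0:ℝ) ∈ Set.Icc (0:ℝ) 1 := by norm_num
  have h1mem : (1:ℝ) ∈ Set.Icc (0:ℝ) 1 := by norm_num
  -- nonnegativity of g qstar
  have hc0 : 0 ≤ g qstar := by
    have h := hconc.2 h0mem h1mem (show (0:ℝ) ≤ 1 - qstar by linarith) h0q (by ring)
    simp only [smul_eq_mul] at h
    have e : (1 - qstar) * 0 + qstar * 1 = qstar := by ring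
    rw [e] at h
    nlinarith
  have hint : ∀ x y : ℝ, 0 ≤ x → x ≤ y → y ≤ 1 →
      IntervalIntegrable g MeasureTheory.volume x y := fun x y hx hxy hy =>
    (hcont.mono (by rw [Set.uIcc_of_le hxy]; exact Set.Icc_subset_Icc hx hy)).intervalIntegrable
  -- pointwise bound on [qstar, 1] (requires qstar < 1)
  have bound2 : qstar < 1 → ∀ t ∈ Set.Icc qstar (1:ℝ),
      g qstar * (1 - t) / (1 - qstar) ≤ g t := by
    intro hlt t ht
    have hden : (0:ℝ) < 1 - qstar := by linarith
    have key := hconc.2 hsmem h1mem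
      (div_nonneg (show (0:ℝ) ≤ 1 - t by linarith [ht.2]) hden.le)
      (div_nonneg (show (0:ℝ) ≤ t - qstar by linarith [ht.1]) hden.le)
      (by field_simp; ring)
    simp only [smul_eq_mul] at key
    have e : (1 - t)/(1 - qstar) * qstar + (t - qstar)/(1 - qstar) * 1 = t := by
      field_simp; ring
    rw [e] at key
    have hb' : 0 ≤ (t - qstar)/(1 - qstar) * g 1 :=
      mul_nonneg (div_nonneg (by linarith [ht.1]) hden.le) h1
    calc g qstar * (1 - t) / (1 - qstar) = (1 - t)/(1 - qstar) * g qstar := by ring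
      _ ≤ (1 - t)/(1 - qstar) * g qstar + (t - qstar)/(1 - qstar) * g 1 := by linarith
      _ ≤ g t := key
  -- split the integral
  have hsplit : (∫ t in (0:ℝ)..qbar, g t)
      = (∫ t in (0:ℝ)..qstar, g t) + ∫ t in qstar..qbar, g t :=
    (intervalIntegral.integral_add_adjacent_intervals (hint 0 qstar le_rfl h0q hs1)
      (hint qstar qbar h0q hqq hq1)).symm
  -- first integral lower bound
  have hI1 : g qstar * qstar / 2 ≤ ∫ t in (0:ℝ)..qstar, g t := by
    rcases eq_or_lt_of_le h0q with h | hpos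
    · simp [← h]
    · have hb : ∀ t ∈ Set.Icc (0:ℝ) qstar, g qstar / qstar * t ≤ g t := by
        intro t ht
        have key := hconc.2 h0mem hsmem
          (div_nonneg (show (0:ℝ) ≤ qstar - t by linarith [ht.2]) hpos.le)
          (div_nonneg ht.1 hpos.le)
          (by field_simp; ring)
        simp only [smul_eq_mul] at key
        have e : (qstar - t)/qstar * 0 + t/qstar * qstar = t := by
          field_simp; ring
        rw [e] at key
        have h0' : 0 ≤ (qstar - t)/qstar * g 0 :=
          mul_nonneg (div_nonneg (by linarith [ht.2]) hpos.le) h0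
        calc g qstar / qstar * t = t/qstar * g qstar := by ring
          _ ≤ (qstar - t)/qstar * g 0 + t/qstar * g qstar := by linarith
          _ ≤ g t := key
      have hmono := intervalIntegral.integral_mono_on h0q
        (Continuous.intervalIntegrable (by continuity) 0 qstar)
        (hint 0 qstar le_rfl h0q hs1) hb
      have hcomp : (∫ t in (0:ℝ)..qstar, g qstar / qstar * t)
          = g qstar / qstar * (qstar^2/2) := by
        rw [intervalIntegral.integral_const_mul, integral_id]
        ring
      rw [hcomp] at hmono
      have he : g qstar / qstar * (qstar^2/2) = g qstar * qstar / 2 := by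
        field_simp
      linarith [he ▸ hmono]
  rcases eq_or_lt_of_le hs1 with hseq | hslt
  · -- qstar = 1, hence qbar = 1
    have hbeq : qbar = qstar := le_antisymm (hseq ▸ hq1) hqq
    rw [hsplit, hbeq, intervalIntegral.integral_same]
    nlinarith [hI1]
  · -- qstar < 1
    have hden : (0:ℝ) < 1 - qstar := by linarith
    -- second integral lower bound
    have hI2 : g qstar / (1 - qstar) * ((qbar - qstar) - (qbar^2 - qstar^2)/2)
        ≤ ∫ t in qstar..qbar, g t := by
      have hb : ∀ t ∈ Set.Icc qstar qbar, g qstar / (1 - qstar) * (1 - t) ≤ g t := by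
        intro t ht
        have := bound2 hslt t ⟨ht.1, ht.2.trans hq1⟩
        calc g qstar / (1 - qstar) * (1 - t) = g qstar * (1 - t) / (1 - qstar) := by ring
          _ ≤ g t := this
      have hmono := intervalIntegral.integral_mono_on hqq
        (Continuous.intervalIntegrable (by continuity) qstar qbar)
        (hint qstar qbar h0q hqq hq1) hb
      have hcomp : (∫ t in qstar..qbar, g qstar / (1 - qstar) * (1 - t))
          = g qstar / (1 - qstar) * ((qbar - qstar) - (qbar^2 - qstar^2)/2) := by
        rw [intervalIntegral.integral_const_mul,
          intervalIntegral.integral_sub intervalIntegrable_const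
            intervalIntegral.intervalIntegrable_id,
          integral_id, integral_one]
      rw [hcomp] at hmono
      exact hmono
    have hgb : g qstar * (1 - qbar) / (1 - qstar) ≤ g qbar :=
      bound2 hslt qbar ⟨hqq, hq1⟩
    rw [hsplit]
    have hrect : g qstar * (1 - qbar)^2 / (1 - qstar) ≤ g qbar * (1 - qbar) := by
      have h1b : (0:ℝ) ≤ 1 - qbar := by linarith
      calc g qstar * (1 - qbar)^2 / (1 - qstar)
          = (g qstar * (1 - qbar) / (1 - qstar)) * (1 - qbar) := by ring
        _ ≤ g qbar * (1 - qbar) := mul_le_mul_of_nonneg_right hgb h1b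
    have key : 2 * (g qstar * qstar / 2)
        + 2 * (g qstar / (1 - qstar) * ((qbar - qstar) - (qbar^2 - qstar^2)/2))
        + g qstar * (1 - qbar)^2 / (1 - qstar) = g qstar := by
      field_simp
      ring
    linarith
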